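/- For two i.i.d. items with values drawn from F × F, and any deterministic menu (a,b,c) with a < b ≤ c ≤ a+b and c ≤ 2a, the following identity holds: Rev(a,a,c) + Rev(b,b,c) = 2·Rev(a,b,c). Consequently, at least one of the symmetric menus (a,a,c) or (b,b,c) achieves expected revenue at least Rev(a,b,c). -/
import Mathlib


open MeasureTheory

/-- Payment made by a utility-maximizing additive buyer with values `(v1, v2)` facing the
deterministic menu charging `a` for item 1, `b` for item 2, `c` for the pair;
ties are broken in favor of the higher payment. -/
noncomputable def pay (a b c v1 v2 : ℝ) : ℝ :=
  let u1 := v1 - a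
  let u2 := v2 - b
  let u12 := v1 + v2 - c
  let m := max (max 0 u1) (max u2 u12)
  max (if u1 = m then a else 0) (max (if u2 = m then b else 0) (if u12 = m then c else 0))

/-- Expected revenue of the menu `(a, b, c)` when values are drawn from `μ`. -/
noncomputable def rev (μ : Measure (ℝ × ℝ)) (a b c : ℝ) : ℝ :=
  ∫ v, pay a b c v.1 v.2 ∂μ

lemma pay_closed (x y c v1 v2 : ℝ) (hx : 0 ≤ x) (hxy : x ≤ y) (hyc : y ≤ c)
    (hcxy : c ≤ x + y) :
    pay x y c v1 v2 =
      if c ≤ v1 + v2 ∧ c - x ≤ v2 ∧ c - y ≤ v1 then c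
      else if y ≤ v2 ∧ v1 - x ≤ v2 - y then y
      else if x ≤ v1 then x else 0 := by
  unfold pay
  simp only
  by_cases h1 : c ≤ v1 + v2 ∧ c - x ≤ v2 ∧ c - y ≤ v1
  · rw [if_pos h1]
    obtain ⟨hA, hB, hC⟩ := h1
    have hm : max (max 0 (v1 - x)) (max (v2 - y) (v1 + v2 - c)) = v1 + v2 - c :=
      le_antisymm (max_le (max_le (by linarith) (by linarith)) (max_le (by linarith) le_rfl))
        (le_max_of_le_right (le_max_right _ _))
    rw [hm]
    refine le_antisymm (max_le ?_ (max_le ?_ ?_)) ?_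
    · split_ifs <;> linarith
    · split_ifs <;> linarith
    · split_ifs <;> linarith
    · exact le_max_of_le_right (le_max_of_le_right (le_of_eq (if_pos rfl).symm))
  · rw [if_neg h1]
    by_cases h2 : y ≤ v2 ∧ v1 - x ≤ v2 - y
    · rw [if_pos h2]
      obtain ⟨hA, hB⟩ := h2
      have h12 : v1 + v2 - c < v2 - y := by
        by_contra h'
        push_neg at h'
        exact h1 ⟨by linarith, by linarith, by linarith⟩
      have hm : max (max 0 (v1 - x)) (max (v2 - y) (v1 + v2 - c)) = v2 - y :=
        le_antisymm (max_le (max_le (by linarith) (by linarith)) (max_le le_rfl (le_of_lt h12)))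
          (le_max_of_le_right (le_max_left _ _))
      rw [hm]
      refine le_antisymm (max_le ?_ (max_le ?_ ?_)) ?_
      · split_ifs <;> linarith
      · split_ifs <;> linarith
      · split_ifs <;> linarith
      · exact le_max_of_le_right (le_max_of_le_left (le_of_eq (if_pos rfl).symm))
    · rw [if_neg h2]
      push_neg at h2
      by_cases h3 : x ≤ v1
      · rw [if_pos h3]
        have hu2 : v2 - y < v1 - x := by
          rcases lt_or_ge v2 y with h | h
          · linarith
          · linarith [h2 h]
        have h12 : v1 + v2 - c < v1 - x := by
          by_contra h'
          push_neg at h'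
          exact h1 ⟨by linarith, by linarith, by linarith⟩
        have hm : max (max 0 (v1 - x)) (max (v2 - y) (v1 + v2 - c)) = v1 - x :=
          le_antisymm (max_le (max_le (by linarith) le_rfl)
              (max_le (le_of_lt hu2) (le_of_lt h12)))
            (le_max_of_le_left (le_max_right _ _))
        rw [hm]
        refine le_antisymm (max_le ?_ (max_le ?_ ?_)) ?_
        · split_ifs <;> linarith
        · split_ifs <;> linarith
        · split_ifs <;> linarith
        · exact le_max_of_le_left (le_of_eq (if_pos rfl).symm)
      · rw [if_neg h3]
        push_neg at h3
        have hu2 : v2 - y < 0 := by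
          rcases lt_or_ge v2 y with h | h
          · linarith
          · linarith [h2 h]
        have h12 : v1 + v2 - c < 0 := by
          by_contra h'
          push_neg at h'
          exact h1 ⟨by linarith, by linarith, by linarith⟩
        have hm : max (max 0 (v1 - x)) (max (v2 - y) (v1 + v2 - c)) = 0 :=
          le_antisymm (max_le (max_le le_rfl (by linarith))
              (max_le (le_of_lt hu2) (le_of_lt h12)))
            (le_max_of_le_left (le_max_left _ _))
        rw [hm]
        refine le_antisymm (max_le ?_ (max_le ?_ ?_)) ?_
        · split_ifs <;> linarith
        · split_ifs <;> linarith
        · split_ifs <;> linarith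
        · refine le_max_of_le_left ?_
          split_ifs <;> linarith

lemma pay_nonneg (x y z v1 v2 : ℝ) (hx : 0 ≤ x) : 0 ≤ pay x y z v1 v2 := by
  unfold pay
  simp only
  refine le_max_of_le_left ?_
  split_ifs
  exacts [hx, le_rfl]

lemma pay_le (x y z v1 v2 : ℝ) (hx : x ≤ z) (hy : y ≤ z) (hz : 0 ≤ z) :
    pay x y z v1 v2 ≤ z := by
  unfold pay
  simp only
  refine max_le ?_ (max_le ?_ ?_) <;> split_ifs <;> linarith

lemma measurable_pay (x y z : ℝ) : Measurable (fun v : ℝ × ℝ => pay x y z v.1 v.2) := by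
  unfold pay
  simp only
  have hm : Measurable fun v : ℝ × ℝ =>
      max (max 0 (v.1 - x)) (max (v.2 - y) (v.1 + v.2 - z)) := by fun_prop
  refine Measurable.max ?_ (Measurable.max ?_ ?_) <;>
    exact Measurable.ite (measurableSet_eq_fun (by fun_prop) hm) measurable_const
      measurable_const

lemma pay_key (a b c v1 v2 : ℝ) (ha : 0 ≤ a) (hab : a < b) (hbc : b ≤ c) (h2a : c ≤ 2 * a) :
    pay a a c v1 v2 + pay b b c v1 v2 = pay a b c v1 v2 + pay a b c v2 v1 := by
  have hca : c - a ≤ a := by linarith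
  have hcb : c - b ≤ a := by linarith
  rw [pay_closed a a c v1 v2 ha le_rfl (by linarith) (by linarith),
    pay_closed b b c v1 v2 (by linarith) le_rfl hbc (by linarith),
    pay_closed a b c v1 v2 ha hab.le hbc (by linarith),
    pay_closed a b c v2 v1 ha hab.le hbc (by linarith),
    show v2 + v1 = v1 + v2 from add_comm _ _]
  by_cases hM : c ≤ v1 + v2 ∧ c - a ≤ v2 ∧ c - b ≤ v1
  · by_cases hM' : c ≤ v1 + v2 ∧ c - a ≤ v1 ∧ c - b ≤ v2
    · rw [if_pos hM, if_pos hM',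
        if_pos (show c ≤ v1 + v2 ∧ c - a ≤ v2 ∧ c - a ≤ v1 from ⟨hM.1, hM.2.1, hM'.2.1⟩),
        if_pos (show c ≤ v1 + v2 ∧ c - b ≤ v2 ∧ c - b ≤ v1 from
          ⟨hM.1, by linarith [hM.2.1], by linarith [hM'.2.1]⟩)]
    · have hv1 : v1 < c - a := by
        by_contra h'
        push_neg at h'
        exact hM' ⟨hM.1, h', by linarith [hM.2.1]⟩
      have hv1a : v1 < a := lt_of_lt_of_le hv1 hca
      have h2v : c - a ≤ v2 := hM.2.1
      rw [if_neg (show ¬(c ≤ v1 + v2 ∧ c - a ≤ v2 ∧ c - a ≤ v1) from by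
          rintro ⟨-, -, h⟩; linarith),
        if_pos (show c ≤ v1 + v2 ∧ c - b ≤ v2 ∧ c - b ≤ v1 from ⟨hM.1, by linarith, hM.2.2⟩),
        if_pos hM, if_neg hM',
        if_neg (show ¬(b ≤ v1 ∧ v2 - a ≤ v1 - b) from by rintro ⟨h, -⟩; linarith)]
      by_cases h2 : a ≤ v2
      · rw [if_pos (show a ≤ v2 ∧ v1 - a ≤ v2 - a from ⟨h2, by linarith⟩), if_pos h2]
        ring
      · rw [if_neg (show ¬(a ≤ v2 ∧ v1 - a ≤ v2 - a) from by rintro ⟨h, -⟩; exact h2 h),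
          if_neg (show ¬a ≤ v1 from by intro h; linarith), if_neg h2]
        ring
  · by_cases hM' : c ≤ v1 + v2 ∧ c - a ≤ v1 ∧ c - b ≤ v2
    · have hv2 : v2 < c - a := by
        by_contra h'
        push_neg at h'
        exact hM ⟨hM'.1, h', by linarith [hM'.2.1]⟩
      have hv2a : v2 < a := lt_of_lt_of_le hv2 hca
      have h1v : c - a ≤ v1 := hM'.2.1
      rw [if_neg (show ¬(c ≤ v1 + v2 ∧ c - a ≤ v2 ∧ c - a ≤ v1) from by
          rintro ⟨-, h, -⟩; linarith),
        if_pos (show c ≤ v1 + v2 ∧ c - b ≤ v2 ∧ c - b ≤ v1 from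
          ⟨hM'.1, hM'.2.2, by linarith⟩),
        if_neg hM, if_pos hM',
        if_neg (show ¬(b ≤ v2 ∧ v1 - a ≤ v2 - b) from by rintro ⟨h, -⟩; linarith),
        if_neg (show ¬(a ≤ v2 ∧ v1 - a ≤ v2 - a) from by rintro ⟨h, -⟩; linarith)]
    · have hB : ¬(c ≤ v1 + v2 ∧ c - b ≤ v2 ∧ c - b ≤ v1) := by
        rintro ⟨h1, h2, h3⟩
        rcases le_or_gt (c - a) v2 with h | h
        · exact hM ⟨h1, h, h3⟩
        rcases le_or_gt (c - a) v1 with h' | h'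
        · exact hM' ⟨h1, h', h2⟩
        linarith
      have hA : ¬(c ≤ v1 + v2 ∧ c - a ≤ v2 ∧ c - a ≤ v1) := fun h =>
        hM ⟨h.1, h.2.1, by linarith [h.2.2]⟩
      rw [if_neg hA, if_neg hB, if_neg hM, if_neg hM']
      have hmin : v1 < a ∨ v2 < a := by
        by_contra h
        push_neg at h
        exact hB ⟨by linarith [h.1, h.2], by linarith [h.2], by linarith [h.1]⟩
      rcases hmin with h | h
      · rw [if_neg (show ¬(b ≤ v1 ∧ v2 - a ≤ v1 - b) from by rintro ⟨hh, -⟩; linarith)]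
        by_cases hb2 : b ≤ v2
        · rw [if_pos (show b ≤ v2 ∧ v1 - b ≤ v2 - b from ⟨hb2, by linarith⟩),
            if_pos (show b ≤ v2 ∧ v1 - a ≤ v2 - b from ⟨hb2, by linarith⟩),
            if_pos (show a ≤ v2 ∧ v1 - a ≤ v2 - a from ⟨by linarith, by linarith⟩),
            if_pos (show a ≤ v2 from by linarith)]
          ring
        · rw [if_neg (show ¬(b ≤ v2 ∧ v1 - b ≤ v2 - b) from by rintro ⟨hh, -⟩; exact hb2 hh),
            if_neg (show ¬(b ≤ v2 ∧ v1 - a ≤ v2 - b) from by rintro ⟨hh, -⟩; exact hb2 hh),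
            if_neg (show ¬b ≤ v1 from by intro hh; linarith),
            if_neg (show ¬a ≤ v1 from by intro hh; linarith)]
          by_cases ha2 : a ≤ v2
          · rw [if_pos (show a ≤ v2 ∧ v1 - a ≤ v2 - a from ⟨ha2, by linarith⟩), if_pos ha2]
            ring
          · rw [if_neg (show ¬(a ≤ v2 ∧ v1 - a ≤ v2 - a) from by rintro ⟨hh, -⟩; exact ha2 hh),
              if_neg ha2]
      · rw [if_neg (show ¬(a ≤ v2 ∧ v1 - a ≤ v2 - a) from by rintro ⟨hh, -⟩; linarith),
          if_neg (show ¬(b ≤ v2 ∧ v1 - b ≤ v2 - b) from by rintro ⟨hh, -⟩; linarith),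
          if_neg (show ¬(b ≤ v2 ∧ v1 - a ≤ v2 - b) from by rintro ⟨hh, -⟩; linarith)]
        by_cases hb1 : b ≤ v1
        · rw [if_pos (show b ≤ v1 ∧ v2 - a ≤ v1 - b from ⟨hb1, by linarith⟩), if_pos hb1]
        · rw [if_neg hb1,
            if_neg (show ¬(b ≤ v1 ∧ v2 - a ≤ v1 - b) from by rintro ⟨hh, -⟩; exact hb1 hh),
            if_neg (show ¬a ≤ v2 from by intro hh; linarith)]

theorem stmt9 (μ : Measure ℝ) [IsProbabilityMeasure μ] (hsupp : μ (Set.Iio 0) = 0)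
    (a b c : ℝ) (ha : 0 ≤ a) (hab : a < b) (hbc : b ≤ c) (hsub : c ≤ a + b)
    (h2a : c ≤ 2 * a) :
    rev (μ.prod μ) a a c + rev (μ.prod μ) b b c = 2 * rev (μ.prod μ) a b c ∧
    (rev (μ.prod μ) a b c ≤ rev (μ.prod μ) a a c ∨
      rev (μ.prod μ) a b c ≤ rev (μ.prod μ) b b c) := by
  have hc0 : 0 ≤ c := by linarith
  have hint : ∀ x y : ℝ, 0 ≤ x → x ≤ c → y ≤ c →
      Integrable (fun v : ℝ × ℝ => pay x y c v.1 v.2) (μ.prod μ) := by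
    intro x y hx hxc hyc
    refine ⟨(measurable_pay x y c).aestronglyMeasurable, ?_⟩
    apply HasFiniteIntegral.of_bounded (C := c)
    filter_upwards with v
    rw [Real.norm_eq_abs, abs_le]
    exact ⟨by linarith [pay_nonneg x y c v.1 v.2 hx], pay_le x y c v.1 v.2 hxc hyc hc0⟩
  have hintswap : Integrable (fun v : ℝ × ℝ => pay a b c v.2 v.1) (μ.prod μ) :=
    (hint a b ha (by linarith) hbc).swap
  have hswap : ∫ v, pay a b c v.2 v.1 ∂(μ.prod μ) = ∫ v, pay a b c v.1 v.2 ∂(μ.prod μ) :=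
    integral_prod_swap (fun v : ℝ × ℝ => pay a b c v.1 v.2)
  have e1 : rev (μ.prod μ) a a c + rev (μ.prod μ) b b c = 2 * rev (μ.prod μ) a b c := by
    unfold rev
    rw [← integral_add (hint a a ha (by linarith) (by linarith))
      (hint b b (by linarith) hbc hbc)]
    have hfun : (fun v : ℝ × ℝ => pay a a c v.1 v.2 + pay b b c v.1 v.2) =
        fun v : ℝ × ℝ => pay a b c v.1 v.2 + pay a b c v.2 v.1 :=
      funext fun v => pay_key a b c v.1 v.2 ha hab hbc h2a
    rw [hfun, integral_add (hint a b ha (by linarith) hbc) hintswap, hswap]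
    ring
  refine ⟨e1, ?_⟩
  by_contra h
  push_neg at h
  obtain ⟨h1, h2⟩ := h
  linarith
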